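/- Let V be a finite set, π strictly positive probability weights, k ∈ ℕ, and x ≠ y ∈ V. For f : Ω_k → ℝ define the Binomial thermalization operator (P^{Bin}_{xy} f)(ξ) = E[f(Ξ^{xy}_ξ)], where Ξ^{xy}_ξ replaces (ξ(x), ξ(y)) by (Y, ξ(x)+ξ(y)−Y) with Y ~ Binomial(ξ(x)+ξ(y), π(x)/(π(x)+π(y))). For a probability vector η on V, define (Λ_k f)(η) = E_{Multinomial(k,η)}[f], and let η^{xy} be the averaged vector: η^{xy}(x) = (π(x)/(π(x)+π(y)))(η(x)+η(y)), η^{xy}(y) = (π(y)/(π(x)+π(y)))(η(x)+η(y)), η^{xy}(z) = η(z) otherwise. Then for every f : Ω_k → ℝ and every probability vector η: (Λ_k (P^{Bin}_{xy} f))(η) = (Λ_k f)(η^{xy}). -/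

import Mathlib

open Finset

/-- Multinomial distribution with `k` trials and success probabilities `p`,
on configurations `ξ : V → ℕ` with total sum `k` (encoded via `Fin (k+1)`). -/
noncomputable def multinomialPMF {V : Type*} [Fintype V] [DecidableEq V] (k : ℕ) (p : V → ℝ)
    (ξ : {ξ : V → Fin (k + 1) // ∑ x, (ξ x : ℕ) = k}) : ℝ :=
  (Nat.factorial k : ℝ) * ∏ x, p x ^ (ξ.1 x : ℕ) / (Nat.factorial (ξ.1 x) : ℝ)

/-- Transition kernel of the one-edge Binomial thermalization move at `{x,y}`:
the configuration is left unchanged off `{x, y}`, the total number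
`m = ξ x + ξ y` of particles is conserved, and the new number of particles at
`x` is `Binomial(m, π x / (π x + π y))`-distributed, so that
`(P^Bin_{xy} f)(ξ) = ∑ ζ, binKernel k π x y ξ ζ * f ζ = E[f(Ξ^{xy}_ξ)]`. -/
noncomputable def binKernel {V : Type*} [Fintype V] [DecidableEq V] (k : ℕ) (π : V → ℝ)
    (x y : V) (ξ ζ : {ξ : V → Fin (k + 1) // ∑ x, (ξ x : ℕ) = k}) : ℝ :=
  if (∀ z, z ≠ x → z ≠ y → ζ.1 z = ξ.1 z) ∧ ((ζ.1 x : ℕ) + (ζ.1 y : ℕ) = (ξ.1 x : ℕ) + (ξ.1 y : ℕ))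
  then (Nat.choose ((ξ.1 x : ℕ) + (ξ.1 y : ℕ)) (ζ.1 x : ℕ) : ℝ) *
        (π x / (π x + π y)) ^ (ζ.1 x : ℕ) *
        (1 - π x / (π x + π y)) ^ ((ξ.1 x : ℕ) + (ξ.1 y : ℕ) - (ζ.1 x : ℕ))
  else 0

/-- Decompose a sum over a fintype by pulling out two distinct elements. -/
lemma sum_decomp_aux {V : Type*} [Fintype V] [DecidableEq V] {M : Type*} [AddCommMonoid M]
    (g : V → M) (x y : V) (hxy : x ≠ y) :
    ∑ z, g z = g x + (g y + ∑ z ∈ (univ.erase x).erase y, g z) := by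
  rw [← Finset.add_sum_erase _ g (mem_univ x),
    ← Finset.add_sum_erase _ g (Finset.mem_erase.2 ⟨hxy.symm, mem_univ y⟩)]

lemma prod_decomp_aux {V : Type*} [Fintype V] [DecidableEq V] {M : Type*} [CommMonoid M]
    (g : V → M) (x y : V) (hxy : x ≠ y) :
    ∏ z, g z = g x * (g y * ∏ z ∈ (univ.erase x).erase y, g z) := by
  rw [← Finset.mul_prod_erase _ g (mem_univ x),
    ← Finset.mul_prod_erase _ g (Finset.mem_erase.2 ⟨hxy.symm, mem_univ y⟩)]


/-- Configuration equal to `ζ` off `{x,y}`, with prescribed values at `x` and `y`. -/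
def cfg {V : Type*} [DecidableEq V] {k : ℕ} (x y : V) (a b : Fin (k + 1))
    (ζ : V → Fin (k + 1)) : V → Fin (k + 1) :=
  fun z => if z = x then a else if z = y then b else ζ z

@[simp] lemma cfg_x {V : Type*} [DecidableEq V] {k : ℕ} (x y : V) (a b : Fin (k + 1))
    (ζ : V → Fin (k + 1)) : cfg x y a b ζ x = a := by simp [cfg]

lemma cfg_y {V : Type*} [DecidableEq V] {k : ℕ} {x y : V} (hxy : x ≠ y) (a b : Fin (k + 1))
    (ζ : V → Fin (k + 1)) : cfg x y a b ζ y = b := by simp [cfg, Ne.symm hxy]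

lemma cfg_other {V : Type*} [DecidableEq V] {k : ℕ} {x y z : V} (hzx : z ≠ x) (hzy : z ≠ y)
    (a b : Fin (k + 1)) (ζ : V → Fin (k + 1)) : cfg x y a b ζ z = ζ z := by
  simp [cfg, hzx, hzy]


lemma pair_le {V : Type*} [Fintype V] [DecidableEq V] {k : ℕ} {x y : V} (hxy : x ≠ y)
    (ζ : {ξ : V → Fin (k + 1) // ∑ x, (ξ x : ℕ) = k}) :
    (ζ.1 x : ℕ) + (ζ.1 y : ℕ) ≤ k := by
  have h : ∑ z, (ζ.1 z : ℕ) = (ζ.1 x : ℕ) + ((ζ.1 y : ℕ)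
      + ∑ z ∈ (univ.erase x).erase y, (ζ.1 z : ℕ)) := sum_decomp_aux _ x y hxy
  rw [ζ.2] at h
  omega

/-- The configuration agreeing with `ζ` off `{x,y}`, with `j` particles at `x` and
`ζ x + ζ y - j` particles at `y`. -/
def jconf {V : Type*} [Fintype V] [DecidableEq V] {k : ℕ} {x y : V} (hxy : x ≠ y)
    (ζ : {ξ : V → Fin (k + 1) // ∑ x, (ξ x : ℕ) = k}) (j : ℕ)
    (hj : j ≤ (ζ.1 x : ℕ) + (ζ.1 y : ℕ)) :
    {ξ : V → Fin (k + 1) // ∑ x, (ξ x : ℕ) = k} :=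
  ⟨cfg x y ⟨j, by have := pair_le hxy ζ; omega⟩
      ⟨(ζ.1 x : ℕ) + (ζ.1 y : ℕ) - j, by have := pair_le hxy ζ; omega⟩ ζ.1, by
    rw [sum_decomp_aux _ x y hxy, cfg_x, cfg_y hxy]
    have htail : ∑ z ∈ (univ.erase x).erase y,
        ((cfg x y (⟨j, by have := pair_le hxy ζ; omega⟩ : Fin (k+1))
          (⟨(ζ.1 x : ℕ) + (ζ.1 y : ℕ) - j, by have := pair_le hxy ζ; omega⟩ : Fin (k+1))
          ζ.1 z : ℕ))
        = ∑ z ∈ (univ.erase x).erase y, (ζ.1 z : ℕ) := by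
      apply Finset.sum_congr rfl
      intro z hz
      obtain ⟨hzy, hzx⟩ : z ≠ y ∧ z ≠ x := by
        simpa [Finset.mem_erase] using hz
      rw [cfg_other hzx hzy]
    rw [htail]
    have h : ∑ z, (ζ.1 z : ℕ) = (ζ.1 x : ℕ) + ((ζ.1 y : ℕ)
        + ∑ z ∈ (univ.erase x).erase y, (ζ.1 z : ℕ)) := sum_decomp_aux _ x y hxy
    rw [ζ.2] at h
    simp only [Fin.val_mk]
    omega⟩

@[simp] lemma jconf_val_x {V : Type*} [Fintype V] [DecidableEq V] {k : ℕ} {x y : V}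
    (hxy : x ≠ y) (ζ : {ξ : V → Fin (k + 1) // ∑ x, (ξ x : ℕ) = k}) (j : ℕ)
    (hj : j ≤ (ζ.1 x : ℕ) + (ζ.1 y : ℕ)) :
    ((jconf hxy ζ j hj).1 x : ℕ) = j := by
  simp [jconf]

@[simp] lemma jconf_val_y {V : Type*} [Fintype V] [DecidableEq V] {k : ℕ} {x y : V}
    (hxy : x ≠ y) (ζ : {ξ : V → Fin (k + 1) // ∑ x, (ξ x : ℕ) = k}) (j : ℕ)
    (hj : j ≤ (ζ.1 x : ℕ) + (ζ.1 y : ℕ)) :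
    ((jconf hxy ζ j hj).1 y : ℕ) = (ζ.1 x : ℕ) + (ζ.1 y : ℕ) - j := by
  simp [jconf, cfg_y hxy]

lemma jconf_val_other {V : Type*} [Fintype V] [DecidableEq V] {k : ℕ} {x y z : V}
    (hxy : x ≠ y) (hzx : z ≠ x) (hzy : z ≠ y)
    (ζ : {ξ : V → Fin (k + 1) // ∑ x, (ξ x : ℕ) = k}) (j : ℕ)
    (hj : j ≤ (ζ.1 x : ℕ) + (ζ.1 y : ℕ)) :
    (jconf hxy ζ j hj).1 z = ζ.1 z := by
  simp [jconf, cfg_other hzx hzy]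

lemma key_intertwine {V : Type*} [Fintype V] [DecidableEq V] (k : ℕ) (π : V → ℝ)
    (hπpos : ∀ z, 0 < π z) (x y : V) (hxy : x ≠ y) (η : V → ℝ)
    (ζ : {ξ : V → Fin (k + 1) // ∑ x, (ξ x : ℕ) = k}) :
    ∑ ξ : {ξ : V → Fin (k + 1) // ∑ x, (ξ x : ℕ) = k},
      multinomialPMF k η ξ * binKernel k π x y ξ ζ
    = multinomialPMF k (fun z => if z = x then π x / (π x + π y) * (η x + η y)
        else if z = y then π y / (π x + π y) * (η x + η y) else η z) ζ := by
  have hs : 0 < π x + π y := by have := hπpos x; have := hπpos y; linarith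
  set p : ℝ := π x / (π x + π y) with hp
  have hq : 1 - p = π y / (π x + π y) := by rw [hp]; field_simp; ring
  set r : ℕ := (ζ.1 x : ℕ) with hr
  set t : ℕ := (ζ.1 y : ℕ) with ht
  set T : ℕ := ∑ z ∈ (univ.erase x).erase y, (ζ.1 z : ℕ) with hT
  have hk : r + t + T = k := by
    have h : ∑ z, (ζ.1 z : ℕ) = (ζ.1 x : ℕ) + ((ζ.1 y : ℕ)
        + ∑ z ∈ (univ.erase x).erase y, (ζ.1 z : ℕ)) := sum_decomp_aux _ x y hxy
    rw [ζ.2] at h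
    omega
  have hmk : r + t ≤ k := by omega
  set B : ℝ := (Nat.choose (r + t) r : ℝ) * p ^ r * (1 - p) ^ t with hB
  set R : ℝ := ∏ z ∈ (univ.erase x).erase y, η z ^ (ζ.1 z : ℕ) / (Nat.factorial (ζ.1 z) : ℝ)
    with hR
  -- Step A: rewrite the kernel
  have stepA : ∀ ξ : {ξ : V → Fin (k + 1) // ∑ x, (ξ x : ℕ) = k},
      multinomialPMF k η ξ * binKernel k π x y ξ ζ
      = if (∀ z, z ≠ x → z ≠ y → ζ.1 z = ξ.1 z) ∧ (r + t = (ξ.1 x : ℕ) + (ξ.1 y : ℕ))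
        then B * multinomialPMF k η ξ else 0 := by
    intro ξ
    rw [binKernel]
    split_ifs with h
    · obtain ⟨h1, h2⟩ := h
      rw [← h2]
      have : r + t - r = t := by omega
      rw [this, hB]
      ring
    · ring
  rw [Finset.sum_congr rfl (fun ξ _ => stepA ξ), ← Finset.sum_filter, ← Finset.mul_sum]
  have stepB : ∑ ξ ∈ Finset.univ.filter
        (fun ξ : {ξ : V → Fin (k + 1) // ∑ x, (ξ x : ℕ) = k} =>
          (∀ z, z ≠ x → z ≠ y → ζ.1 z = ξ.1 z) ∧ (r + t = (ξ.1 x : ℕ) + (ξ.1 y : ℕ))),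
        multinomialPMF k η ξ
      = ∑ j ∈ range (r + t + 1),
          (Nat.factorial k : ℝ) * (η x ^ j / (Nat.factorial j : ℝ) *
            (η y ^ (r + t - j) / (Nat.factorial (r + t - j) : ℝ) * R)) := by
    apply Finset.sum_bij' (i := fun ξ _ => (ξ.1 x : ℕ))
      (j := fun j hj => jconf hxy ζ j (by have := Finset.mem_range.1 hj; omega))
    case hj =>
      intro j hj
      have hj' := Finset.mem_range.1 hj
      refine Finset.mem_filter.2 ⟨Finset.mem_univ _, ?_, ?_⟩
      · intro z hzx hzy
        rw [jconf_val_other hxy hzx hzy]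
      · rw [← hr, ← ht] at *
        rw [jconf_val_x, jconf_val_y]
        omega
    case hi =>
      intro ξ hξ
      obtain ⟨-, h2⟩ := (Finset.mem_filter.1 hξ).2
      refine Finset.mem_range.2 ?_
      omega
    case right_neg =>
      intro j hj
      rw [jconf_val_x]
    case left_neg =>
      intro ξ hξ
      obtain ⟨h1, h2⟩ := (Finset.mem_filter.1 hξ).2
      apply Subtype.ext
      funext z
      by_cases hzx : z = x
      · subst hzx
        apply Fin.ext
        rw [jconf_val_x]
      · by_cases hzy : z = y
        · subst hzy
          apply Fin.ext
          rw [jconf_val_y]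
          omega
        · rw [jconf_val_other hxy hzx hzy]
          exact h1 z hzx hzy
    case h =>
      intro ξ hξ
      obtain ⟨h1, h2⟩ := (Finset.mem_filter.1 hξ).2
      simp only [multinomialPMF]
      rw [prod_decomp_aux (fun z => η z ^ (ξ.1 z : ℕ) / (Nat.factorial (ξ.1 z) : ℝ)) x y hxy]
      have hy : (ξ.1 y : ℕ) = r + t - (ξ.1 x : ℕ) := by omega
      have hRtail : ∏ z ∈ (univ.erase x).erase y,
          η z ^ (ξ.1 z : ℕ) / (Nat.factorial (ξ.1 z) : ℝ) = R := by
        apply Finset.prod_congr rfl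
        intro z hz
        obtain ⟨hzy, hzx⟩ : z ≠ y ∧ z ≠ x := by
          simpa [Finset.mem_erase] using hz
        rw [h1 z hzx hzy]
      beta_reduce
      rw [hy, hRtail]
  rw [stepB]
  have hfR : ∀ n : ℕ, ((Nat.factorial n : ℝ)) ≠ 0 := fun n =>
    Nat.cast_ne_zero.2 (Nat.factorial_ne_zero n)
  have stepC : ∑ j ∈ range (r + t + 1),
        (Nat.factorial k : ℝ) * (η x ^ j / (Nat.factorial j : ℝ) *
          (η y ^ (r + t - j) / (Nat.factorial (r + t - j) : ℝ) * R))
      = (Nat.factorial k : ℝ) * R *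
          ((η x + η y) ^ (r + t) / (Nat.factorial (r + t) : ℝ)) := by
    rw [add_pow, Finset.sum_div, Finset.mul_sum]
    apply Finset.sum_congr rfl
    intro j hj
    have hj' : j ≤ r + t := by
      have := Finset.mem_range.1 hj; omega
    have hfact : (Nat.choose (r + t) j : ℝ) * (Nat.factorial j : ℝ) *
        (Nat.factorial (r + t - j) : ℝ) = (Nat.factorial (r + t) : ℝ) := by
      exact_mod_cast Nat.choose_mul_factorial_mul_factorial hj'
    field_simp
    linear_combination (-(R * η x ^ j * η y ^ (r + t - j))) * hfact
  rw [stepC]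
  -- Step D: the right-hand side
  have hx' : (if x = x then π x / (π x + π y) * (η x + η y)
      else if x = y then π y / (π x + π y) * (η x + η y) else η x)
      = p * (η x + η y) := by simp [hp]
  have hy' : (if y = x then π x / (π x + π y) * (η x + η y)
      else if y = y then π y / (π x + π y) * (η x + η y) else η y)
      = (1 - p) * (η x + η y) := by simp [hq, Ne.symm hxy]
  have hchoose : (Nat.choose (r + t) r : ℝ) * (Nat.factorial r : ℝ) *
      (Nat.factorial t : ℝ) = (Nat.factorial (r + t) : ℝ) := by
    have h := Nat.choose_mul_factorial_mul_factorial (Nat.le_add_right r t)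
    rw [Nat.add_sub_cancel_left] at h
    exact_mod_cast h
  simp only [multinomialPMF]
  rw [prod_decomp_aux (fun z => (if z = x then π x / (π x + π y) * (η x + η y)
      else if z = y then π y / (π x + π y) * (η x + η y) else η z) ^ (ζ.1 z : ℕ)
      / (Nat.factorial (ζ.1 z) : ℝ)) x y hxy]
  beta_reduce
  rw [hx', hy']
  have hRtail' : ∏ z ∈ (univ.erase x).erase y,
      (if z = x then π x / (π x + π y) * (η x + η y)
        else if z = y then π y / (π x + π y) * (η x + η y) else η z) ^ (ζ.1 z : ℕ)
      / (Nat.factorial (ζ.1 z) : ℝ) = R := by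
    apply Finset.prod_congr rfl
    intro z hz
    obtain ⟨hzy, hzx⟩ : z ≠ y ∧ z ≠ x := by
      simpa [Finset.mem_erase] using hz
    rw [if_neg hzx, if_neg hzy]
  rw [hRtail', hB, ← hr, ← ht]
  rw [mul_pow, mul_pow, pow_add]
  field_simp
  linear_combination (R * p ^ r * (1 - p) ^ t *
    (η x + η y) ^ r * (η x + η y) ^ t) * hchoose

/-- Single-edge Multinomial intertwining between the Averaging process and the
Binomial Splitting process: `Λ_k (P^Bin_{xy} f) (η) = Λ_k f (η^{xy})`. -/
theorem multinomial_intertwining_single_edge {V : Type*} [Fintype V] [DecidableEq V]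
    [Nonempty V] (k : ℕ) (π : V → ℝ)
    (hπpos : ∀ z, 0 < π z) (hπ1 : ∑ z, π z = 1)
    (x y : V) (hxy : x ≠ y)
    (f : {ξ : V → Fin (k + 1) // ∑ x, (ξ x : ℕ) = k} → ℝ)
    (η : V → ℝ) (hηpos : ∀ z, 0 ≤ η z) (hη1 : ∑ z, η z = 1)
    (ηxy : V → ℝ)
    (hηxy : ηxy = fun z =>
      if z = x then π x / (π x + π y) * (η x + η y)
      else if z = y then π y / (π x + π y) * (η x + η y)
      else η z) :
    ∑ ξ : {ξ : V → Fin (k + 1) // ∑ x, (ξ x : ℕ) = k},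
        multinomialPMF k η ξ * ∑ ζ, binKernel k π x y ξ ζ * f ζ
      = ∑ ξ : {ξ : V → Fin (k + 1) // ∑ x, (ξ x : ℕ) = k},
          multinomialPMF k ηxy ξ * f ξ := by
  subst hηxy
  calc
    ∑ ξ : {ξ : V → Fin (k + 1) // ∑ x, (ξ x : ℕ) = k},
        multinomialPMF k η ξ * ∑ ζ, binKernel k π x y ξ ζ * f ζ
      = ∑ ξ : {ξ : V → Fin (k + 1) // ∑ x, (ξ x : ℕ) = k},
          ∑ ζ, multinomialPMF k η ξ * binKernel k π x y ξ ζ * f ζ := by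
        apply Finset.sum_congr rfl
        intro ξ _
        rw [Finset.mul_sum]
        apply Finset.sum_congr rfl
        intro ζ _
        ring
    _ = ∑ ζ : {ξ : V → Fin (k + 1) // ∑ x, (ξ x : ℕ) = k},
          ∑ ξ, multinomialPMF k η ξ * binKernel k π x y ξ ζ * f ζ := Finset.sum_comm
    _ = ∑ ζ : {ξ : V → Fin (k + 1) // ∑ x, (ξ x : ℕ) = k},
          (∑ ξ, multinomialPMF k η ξ * binKernel k π x y ξ ζ) * f ζ := by
        apply Finset.sum_congr rfl
        intro ζ _
        rw [Finset.sum_mul]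
    _ = ∑ ξ : {ξ : V → Fin (k + 1) // ∑ x, (ξ x : ℕ) = k},
          multinomialPMF k (fun z =>
            if z = x then π x / (π x + π y) * (η x + η y)
            else if z = y then π y / (π x + π y) * (η x + η y)
            else η z) ξ * f ξ := by
        apply Finset.sum_congr rfl
        intro ζ _
        rw [key_intertwine k π hπpos x y hxy η ζ]
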